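/- arXiv:1905.07535 — 2 statements merged into one kernel-verified Lean document; each statement's English description precedes it below -/
import Mathlib

section
/- Let π be the permutation (a b c d e f g)(h i j k l m n) of the 16 vertices {a,…,p} of K_16 (fixing o and p), let F_0 = {ah, bi, cj, dk, el, fm, gn, op}, and let F_1 = {ab, cg, do, em, fi, hp, jl, kn}, F_2 = {ac, bk, dj, ei, fp, gl, ho, mn}. Then the 15 one-factors F_0, π^t(F_1), π^t(F_2) for t = 0,…,6 are pairwise disjoint and together partition the 120 edges of K_16, i.e., they form a 1-factorisation of K_16, and π is an automorphism of this 1-factorisation. -/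
/-- A 1-factor (perfect matching) of the complete graph `K_n`. -/
def IsPerfectMatchingKn (n : ℕ) (M : Finset (Sym2 (Fin n))) : Prop :=
  (∀ e ∈ M, ¬ e.IsDiag) ∧ ∀ v : Fin n, ∃! e, e ∈ M ∧ v ∈ e

/-- A 1-factorisation of `K_n`. -/
def IsOneFactorizationKn (n : ℕ) (F : Finset (Finset (Sym2 (Fin n)))) : Prop :=
  (∀ M ∈ F, IsPerfectMatchingKn n M) ∧
  (∀ M ∈ F, ∀ N ∈ F, M ≠ N → Disjoint M N) ∧
  (∀ e : Sym2 (Fin n), ¬ e.IsDiag → ∃ M ∈ F, e ∈ M)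

/-- The image of a 1-factorisation under a vertex permutation. -/
def permImage {n : ℕ} (π : Equiv.Perm (Fin n)) (F : Finset (Finset (Sym2 (Fin n)))) :
    Finset (Finset (Sym2 (Fin n))) :=
  F.image fun M => M.image (Sym2.map π)

/-- The permutation `(a b c d e f g)(h i j k l m n)` of the 16 vertices `a,…,p = 0,…,15`
(fixing `o = 14` and `p = 15`). -/
def π₇ : Equiv.Perm (Fin 16) :=
  ⟨![1, 2, 3, 4, 5, 6, 0, 8, 9, 10, 11, 12, 13, 7, 14, 15],
   ![6, 0, 1, 2, 3, 4, 5, 13, 7, 8, 9, 10, 11, 12, 14, 15],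
   by decide, by decide⟩

/-- `F₀ = {ah, bi, cj, dk, el, fm, gn, op}`. -/
def F₀ : Finset (Sym2 (Fin 16)) :=
  {s(0, 7), s(1, 8), s(2, 9), s(3, 10), s(4, 11), s(5, 12), s(6, 13), s(14, 15)}

/-- `F₁ = {ab, cg, do, em, fi, hp, jl, kn}`. -/
def F₁ : Finset (Sym2 (Fin 16)) :=
  {s(0, 1), s(2, 6), s(3, 14), s(4, 12), s(5, 8), s(7, 15), s(9, 11), s(10, 13)}

/-- `F₂ = {ac, bk, dj, ei, fp, gl, ho, mn}`. -/
def F₂ : Finset (Sym2 (Fin 16)) :=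
  {s(0, 2), s(1, 10), s(3, 9), s(4, 8), s(5, 15), s(6, 11), s(7, 14), s(12, 13)}

def A0 : Finset (Sym2 (Fin 16)) := {s(0, 1), s(2, 6), s(3, 14), s(4, 12), s(5, 8), s(7, 15), s(9, 11), s(10, 13)}
def A1 : Finset (Sym2 (Fin 16)) := {s(0, 3), s(1, 2), s(4, 14), s(5, 13), s(6, 9), s(7, 11), s(8, 15), s(10, 12)}
def A2 : Finset (Sym2 (Fin 16)) := {s(0, 10), s(1, 4), s(2, 3), s(5, 14), s(6, 7), s(8, 12), s(9, 15), s(11, 13)}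
def A3 : Finset (Sym2 (Fin 16)) := {s(0, 8), s(1, 11), s(2, 5), s(3, 4), s(6, 14), s(7, 12), s(9, 13), s(10, 15)}
def A4 : Finset (Sym2 (Fin 16)) := {s(0, 14), s(1, 9), s(2, 12), s(3, 6), s(4, 5), s(7, 10), s(8, 13), s(11, 15)}
def A5 : Finset (Sym2 (Fin 16)) := {s(0, 4), s(1, 14), s(2, 10), s(3, 13), s(5, 6), s(7, 9), s(8, 11), s(12, 15)}
def A6 : Finset (Sym2 (Fin 16)) := {s(0, 6), s(1, 5), s(2, 14), s(3, 11), s(4, 7), s(8, 10), s(9, 12), s(13, 15)}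
def B0 : Finset (Sym2 (Fin 16)) := {s(0, 2), s(1, 10), s(3, 9), s(4, 8), s(5, 15), s(6, 11), s(7, 14), s(12, 13)}
def B1 : Finset (Sym2 (Fin 16)) := {s(0, 12), s(1, 3), s(2, 11), s(4, 10), s(5, 9), s(6, 15), s(7, 13), s(8, 14)}
def B2 : Finset (Sym2 (Fin 16)) := {s(0, 15), s(1, 13), s(2, 4), s(3, 12), s(5, 11), s(6, 10), s(7, 8), s(9, 14)}
def B3 : Finset (Sym2 (Fin 16)) := {s(0, 11), s(1, 15), s(2, 7), s(3, 5), s(4, 13), s(6, 12), s(8, 9), s(10, 14)}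
def B4 : Finset (Sym2 (Fin 16)) := {s(0, 13), s(1, 12), s(2, 15), s(3, 8), s(4, 6), s(5, 7), s(9, 10), s(11, 14)}
def B5 : Finset (Sym2 (Fin 16)) := {s(0, 5), s(1, 7), s(2, 13), s(3, 15), s(4, 9), s(6, 8), s(10, 11), s(12, 14)}
def B6 : Finset (Sym2 (Fin 16)) := {s(0, 9), s(1, 6), s(2, 8), s(3, 7), s(4, 15), s(5, 10), s(11, 12), s(13, 14)}

def EX : Finset (Finset (Sym2 (Fin 16))) := {F₀, A0, A1, A2, A3, A4, A5, A6, B0, B1, B2, B3, B4, B5, B6}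

lemma existsUnique_mem_iff_filter_card {α : Type*} [DecidableEq α] (s : Finset α)
    (p : α → Prop) [DecidablePred p] :
    (∃! x, x ∈ s ∧ p x) ↔ (s.filter p).card = 1 := by
  rw [Finset.card_eq_one]
  constructor
  · rintro ⟨a, ⟨ha, hpa⟩, h⟩
    refine ⟨a, Finset.eq_singleton_iff_unique_mem.2
      ⟨Finset.mem_filter.2 ⟨ha, hpa⟩, fun x hx => h x (Finset.mem_filter.1 hx)⟩⟩
  · rintro ⟨a, ha⟩
    have h1 := Finset.eq_singleton_iff_unique_mem.1 ha
    exact ⟨a, Finset.mem_filter.1 h1.1, fun y hy => h1.2 y (Finset.mem_filter.2 hy)⟩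

set_option maxRecDepth 20000
set_option maxHeartbeats 2000000

lemma pm_of (M : Finset (Sym2 (Fin 16))) (h1 : ∀ e ∈ M, ¬ e.IsDiag)
    (h2 : ∀ v : Fin 16, (M.filter (fun e => v ∈ e)).card = 1) :
    IsPerfectMatchingKn 16 M :=
  ⟨h1, fun v => (existsUnique_mem_iff_filter_card M (fun e => v ∈ e)).2 (h2 v)⟩

lemma pm_all : ∀ M ∈ EX, IsPerfectMatchingKn 16 M := by
  intro M hM
  fin_cases hM <;> exact pm_of _ (by decide) (by decide)

/-- The 15 one-factors `F₀`, `π^t(F₁)`, `π^t(F₂)` for `t = 0,…,6` are pairwise distinct and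
together form a 1-factorisation of `K₁₆` (in particular they are pairwise disjoint and
partition the 120 edges), and `π = (a b c d e f g)(h i j k l m n)` is an automorphism of
this 1-factorisation. -/
theorem stmt15 :
    let 𝓕 : Finset (Finset (Sym2 (Fin 16))) :=
      insert F₀
        (((Finset.range 7).image fun t => F₁.image (Sym2.map ⇑(π₇ ^ t))) ∪
         ((Finset.range 7).image fun t => F₂.image (Sym2.map ⇑(π₇ ^ t))))
    𝓕.card = 15 ∧ IsOneFactorizationKn 16 𝓕 ∧ permImage π₇ 𝓕 = 𝓕 := by
  intro F
  rw [show F = EX from by decide]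
  refine ⟨by decide, ⟨pm_all, ?_, ?_⟩, ?_⟩
  · intro M hM N hN hMN
    rw [Finset.disjoint_left]
    fin_cases hM <;> fin_cases hN <;>
      first
        | exact absurd rfl hMN
        | decide
  · decide
  · unfold permImage
    decide
end

section
/- The explicit 15×15 matrix N_15 given in the paper is a symmetric idempotent Latin square of order 15, but it is not row-Hamiltonian: rows 1 and 7 contain a row cycle of length 3 (on columns 6, 9, 10 with symbol pairs (8,3), (13,8), (3,13)). -/
/-- The Latin square `N₁₅` of the paper, with rows, columns and symbols written 0-based
(entry `k` here represents symbol `k+1` of the paper). -/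
def N15 : Matrix (Fin 15) (Fin 15) (Fin 15) :=
  !![0, 11, 1, 6, 9, 7, 4, 14, 12, 2, 5, 3, 13, 10, 8;
     11, 1, 12, 2, 7, 10, 8, 5, 14, 13, 3, 6, 4, 0, 9;
     1, 12, 2, 13, 3, 8, 11, 9, 6, 14, 0, 4, 7, 5, 10;
     6, 2, 13, 3, 0, 4, 9, 12, 10, 7, 14, 1, 5, 8, 11;
     9, 7, 3, 0, 4, 1, 5, 10, 13, 11, 8, 14, 2, 6, 12;
     7, 10, 8, 4, 1, 5, 2, 6, 11, 0, 12, 9, 14, 3, 13;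
     4, 8, 11, 9, 5, 2, 6, 3, 7, 12, 1, 13, 10, 14, 0;
     14, 5, 9, 12, 10, 6, 3, 7, 4, 8, 13, 2, 0, 11, 1;
     12, 14, 6, 10, 13, 11, 7, 4, 8, 5, 9, 0, 3, 1, 2;
     2, 13, 14, 7, 11, 0, 12, 8, 5, 9, 6, 10, 1, 4, 3;
     5, 3, 0, 14, 8, 12, 1, 13, 9, 6, 10, 7, 11, 2, 4;
     3, 6, 4, 1, 14, 9, 13, 2, 0, 10, 7, 11, 8, 12, 5;
     13, 4, 7, 5, 2, 14, 10, 0, 3, 1, 11, 8, 12, 9, 6;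
     10, 0, 5, 8, 6, 3, 14, 11, 1, 4, 2, 12, 9, 13, 7;
     8, 9, 10, 11, 12, 13, 0, 1, 2, 3, 4, 5, 6, 7, 14]

def sig15 : Equiv.Perm (Fin 15) :=
  ⟨![4,11,12,13,6,1,9,2,0,5,14,8,7,10,3],
   ![8,5,7,14,0,9,4,12,11,6,13,1,2,3,10], by decide, by decide⟩

lemma sig15_prop : ∀ j, sig15 (N15 0 j) = N15 6 j := by decide

/-- `N₁₅` is a symmetric idempotent Latin square of order 15 which is not row-Hamiltonian:
rows 1 and 7 (0-based: 0 and 6) contain a row cycle of length 3, namely the symbol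
permutation `σ` between these two rows satisfies `σ(8) = 3`, `σ(13) = 8`, `σ(3) = 13`
(0-based: `σ(7) = 2`, `σ(12) = 7`, `σ(2) = 12`). -/
theorem stmt17 :
    (∀ i j : Fin 15, N15 i j = N15 j i) ∧
    (∀ i : Fin 15, N15 i i = i) ∧
    (∀ i : Fin 15, Function.Injective (N15 i)) ∧
    (∀ j : Fin 15, Function.Injective fun i => N15 i j) ∧
    ¬ (∀ r s : Fin 15, r ≠ s → ∀ σ : Equiv.Perm (Fin 15),
        (∀ j, σ (N15 r j) = N15 s j) → σ.IsCycle ∧ σ.support = Finset.univ) ∧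
    (∀ σ : Equiv.Perm (Fin 15), (∀ j, σ (N15 0 j) = N15 6 j) →
        σ 7 = 2 ∧ σ 12 = 7 ∧ σ 2 = 12) := by
  refine ⟨by intro i; fin_cases i <;> decide, by decide, by unfold Function.Injective; decide, by decide, ?_, ?_⟩
  · intro h
    have h6 : (0 : Fin 15) ≠ 6 := by decide
    obtain ⟨hc, hs⟩ := h 0 6 h6 sig15 sig15_prop
    have ho : orderOf sig15 = 15 := by
      rw [hc.orderOf, hs]; decide
    have h1 := pow_orderOf_eq_one sig15
    rw [ho] at h1
    have h2 : sig15 ^ 15 ≠ 1 := by decide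
    exact h2 h1
  · intro σ hσ
    have h7 := hσ 5
    have h12 := hσ 8
    have h2 := hσ 9
    simp [N15] at h7 h12 h2
    exact ⟨h7, h12, h2⟩
end
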